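/- Let μ be a Borel probability measure on T identified with [0,1) such that S := ∑_{n=1}^∞ |μ̂(n)| < 1/2. Then for every x ∈ (0,1) and all sufficiently small r > 0, (1 - 2S)·2r ≤ μ(B_r(x)) ≤ (1 + 2S)·2r, where B_r(x) = (x-r, x+r). -/

import Mathlib

open MeasureTheory Filter Topology Set
open scoped ENNReal NNReal

noncomputable def fc (μ : Measure ℝ) (n : ℤ) : ℂ :=
  ∫ x, Complex.exp (-(2 * Real.pi * Complex.I * n * x)) ∂μ

lemma fc_zero (μ : Measure ℝ) [IsProbabilityMeasure μ] : fc μ 0 = 1 := by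
  simp [fc]

lemma fc_neg (μ : Measure ℝ) (n : ℤ) : fc μ (-n) = starRingEnd ℂ (fc μ n) := by
  rw [fc, fc, ← integral_conj]
  congr 1; funext x
  rw [← Complex.exp_conj]
  congr 1
  simp only [map_neg, map_mul, Complex.conj_I, Complex.conj_ofReal, map_ofNat,
    map_intCast, Complex.ofReal_intCast, Int.cast_neg]
  ring

lemma orth (k : ℤ) : (∫ t in (0:ℝ)..1, Complex.exp (2 * Real.pi * Complex.I * k * t)) 
    = if k = 0 then 1 else 0 := by
  rcases eq_or_ne k 0 with h | h
  · simp [h]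
  · rw [if_neg h]
    have hc : (2 * (Real.pi:ℂ) * Complex.I * k) ≠ 0 := by
      simp [Real.pi_ne_zero, Complex.I_ne_zero, h]
    rw [integral_exp_mul_complex hc]
    have h1 : Complex.exp (2 * (Real.pi:ℂ) * Complex.I * k * (1:ℝ)) = 1 := by
      rw [Complex.ofReal_one, mul_one]
      have := Complex.exp_int_mul_two_pi_mul_I k
      rw [← this]; congr 1; ring
    rw [h1]
    simp

noncomputable def trm (μ : Measure ℝ) (n : ℕ) (t : ℝ) : ℝ :=
  2 * (fc μ (n+1) * Complex.exp (2 * Real.pi * Complex.I * (n+1) * t)).re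

noncomputable def dens (μ : Measure ℝ) (t : ℝ) : ℝ := 1 + ∑' n : ℕ, trm μ n t

section

variable {μ : Measure ℝ} (hsum : Summable (fun n : ℕ => ‖fc μ (n+1)‖))

lemma abs_cexp (n : ℕ) (t : ℝ) :
    ‖Complex.exp (2 * Real.pi * Complex.I * (n+1) * t)‖ = 1 := by
  rw [Complex.norm_exp]
  norm_num [Complex.mul_re, Complex.mul_im]

lemma trm_abs_le (n : ℕ) (t : ℝ) : |trm μ n t| ≤ 2 * ‖fc μ (n+1)‖ := by
  rw [trm, abs_mul, abs_two]
  gcongr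
  calc |(fc μ (n+1) * Complex.exp (2 * Real.pi * Complex.I * (n+1) * t)).re|
      ≤ ‖fc μ (n+1) * Complex.exp (2 * Real.pi * Complex.I * (n+1) * t)‖ :=
        Complex.abs_re_le_norm _
    _ = ‖fc μ (n+1)‖ := by rw [norm_mul, abs_cexp, mul_one]

include hsum

lemma summable_trm (t : ℝ) : Summable (fun n => trm μ n t) :=
  Summable.of_abs <| Summable.of_nonneg_of_le (fun n => abs_nonneg _)
    (fun n => trm_abs_le n t) (hsum.mul_left 2)

lemma dens_cont : Continuous (dens μ) := by
  refine continuous_const.add (continuous_tsum (fun n => ?_) (hsum.mul_left 2)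
    (fun n t => trm_abs_le n t))
  have h : Continuous fun t : ℝ => ((2 * Real.pi * Complex.I * (n+1) * t : ℂ)) := by continuity
  exact continuous_const.mul (Complex.continuous_re.comp
    (continuous_const.mul (Complex.continuous_exp.comp h)))

lemma dens_sub_one_abs (t : ℝ) :
    |dens μ t - 1| ≤ 2 * ∑' n : ℕ, ‖fc μ (n+1)‖ := by
  rw [dens, add_sub_cancel_left]
  calc |∑' n, trm μ n t| ≤ ∑' n, |trm μ n t| := by
        simpa using norm_tsum_le_tsum_norm (f := fun n => trm μ n t)
          (by simpa using (summable_trm hsum t).abs)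
    _ ≤ ∑' (n : ℕ), 2 * ‖fc μ (n+1)‖ :=
        Summable.tsum_le_tsum (fun n => trm_abs_le n t) (summable_trm hsum t).abs (hsum.mul_left 2)
    _ = 2 * ∑' (n : ℕ), ‖fc μ (n+1)‖ := tsum_mul_left

end

section Psi

lemma exp_cont (w : ℂ) : Continuous fun t : ℝ => Complex.exp (2 * Real.pi * Complex.I * w * t) :=
  Complex.continuous_exp.comp (by continuity)

lemma trm_complex (μ : Measure ℝ) (n : ℕ) (t : ℝ) : ((trm μ n t : ℝ) : ℂ) =
    fc μ (n+1) * Complex.exp (2 * Real.pi * Complex.I * (n+1) * t)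
      + (starRingEnd ℂ) (fc μ (n+1)) * Complex.exp (-(2 * Real.pi * Complex.I * (n+1) * t)) := by
  have h1 : (starRingEnd ℂ) (Complex.exp (2 * Real.pi * Complex.I * (n+1) * t))
      = Complex.exp (-(2 * Real.pi * Complex.I * (n+1) * t)) := by
    rw [← Complex.exp_conj]
    congr 1
    simp only [map_mul, Complex.conj_I, Complex.conj_ofReal, map_ofNat, map_add, map_one,
      map_natCast]
    ring
  rw [trm, ← Complex.add_conj, map_mul, h1]


lemma trm_cont (μ : Measure ℝ) (n : ℕ) : Continuous (trm μ n) := by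
  have h : Continuous fun t : ℝ => ((2 * Real.pi * Complex.I * (n+1) * t : ℂ)) := by continuity
  exact continuous_const.mul (Complex.continuous_re.comp
    (continuous_const.mul (Complex.continuous_exp.comp h)))

lemma abs_cexp_int (m : ℤ) (t : ℝ) :
    ‖Complex.exp (2 * Real.pi * Complex.I * m * t)‖ = 1 := by
  rw [Complex.norm_exp]
  norm_num [Complex.mul_re, Complex.mul_im]

lemma integral_exp_trm (μ : Measure ℝ) (m : ℤ) (n : ℕ) :
    (∫ t in (0:ℝ)..1, Complex.exp (2 * Real.pi * Complex.I * m * t) * ((trm μ n t : ℝ) : ℂ))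
    = fc μ (n+1) * (if m + (n+1) = 0 then 1 else 0)
      + (starRingEnd ℂ) (fc μ (n+1)) * (if m - (n+1) = 0 then 1 else 0) := by
  have e1 : ∀ t : ℝ, Complex.exp (2 * Real.pi * Complex.I * m * t)
      * Complex.exp (2 * Real.pi * Complex.I * (n+1) * t)
      = Complex.exp (2 * Real.pi * Complex.I * ((m + (n+1) : ℤ)) * t) := by
    intro t; rw [← Complex.exp_add]; congr 1; push_cast; ring
  have e2 : ∀ t : ℝ, Complex.exp (2 * Real.pi * Complex.I * m * t)
      * Complex.exp (-(2 * Real.pi * Complex.I * (n+1) * t))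
      = Complex.exp (2 * Real.pi * Complex.I * ((m - (n+1) : ℤ)) * t) := by
    intro t; rw [← Complex.exp_add]; congr 1; push_cast; ring
  have h : ∀ t : ℝ, Complex.exp (2 * Real.pi * Complex.I * m * t) * ((trm μ n t : ℝ) : ℂ)
      = fc μ (n+1) * Complex.exp (2 * Real.pi * Complex.I * ((m + (n+1) : ℤ)) * t)
        + (starRingEnd ℂ) (fc μ (n+1))
          * Complex.exp (2 * Real.pi * Complex.I * ((m - (n+1) : ℤ)) * t) := by
    intro t
    rw [trm_complex]
    linear_combination fc μ (n+1) * e1 t + (starRingEnd ℂ) (fc μ (n+1)) * e2 t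
  simp_rw [h]
  rw [intervalIntegral.integral_add ?i1 ?i2,
    intervalIntegral.integral_const_mul, intervalIntegral.integral_const_mul, orth, orth]
  all_goals exact (continuous_const.mul (exp_cont _)).intervalIntegrable _ _

lemma psi_fourier (μ : Measure ℝ) [IsProbabilityMeasure μ]
    (hsum : Summable (fun n : ℕ => ‖fc μ (n+1)‖)) (m : ℤ) :
    (∫ t in (0:ℝ)..1, Complex.exp (2 * Real.pi * Complex.I * m * t) * (dens μ t : ℂ))
      = fc μ (-m) := by
  -- split off the constant part of `dens`
  have hcont : Continuous fun t : ℝ => Complex.exp (2 * Real.pi * Complex.I * m * t) :=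
    exp_cont _
  have hcont2 : Continuous fun t : ℝ =>
      Complex.exp (2 * Real.pi * Complex.I * m * t) * ((dens μ t : ℂ) - 1) :=
    hcont.mul ((Complex.continuous_ofReal.comp (dens_cont hsum)).sub continuous_const)
  have hsplit : ∀ t : ℝ, Complex.exp (2 * Real.pi * Complex.I * m * t) * (dens μ t : ℂ)
      = Complex.exp (2 * Real.pi * Complex.I * m * t)
        + Complex.exp (2 * Real.pi * Complex.I * m * t) * ((dens μ t : ℂ) - 1) := by
    intro t; ring
  simp_rw [hsplit]
  rw [intervalIntegral.integral_add (hcont.intervalIntegrable _ _)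
    (hcont2.intervalIntegrable _ _), orth m]
  -- now the main term
  have key : (∫ t in (0:ℝ)..1,
      Complex.exp (2 * Real.pi * Complex.I * m * t) * ((dens μ t : ℂ) - 1))
      = fc μ (-m) - (if m = 0 then 1 else 0) := by
    have hrw : ∀ t : ℝ, Complex.exp (2 * Real.pi * Complex.I * m * t) * ((dens μ t : ℂ) - 1)
        = ∑' n : ℕ, Complex.exp (2 * Real.pi * Complex.I * m * t) * ((trm μ n t : ℝ) : ℂ) := by
      intro t
      rw [dens, Complex.ofReal_add, Complex.ofReal_one, add_sub_cancel_left,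
        Complex.ofReal_tsum, ← tsum_mul_left]
    simp_rw [hrw]
    rw [intervalIntegral.integral_of_le zero_le_one]
    rw [MeasureTheory.integral_tsum ?meas ?fin]
    case meas =>
      exact fun n => ((exp_cont _).mul
        (Complex.continuous_ofReal.comp (trm_cont μ n))).aestronglyMeasurable
    case fin =>
      have hb : ∀ n : ℕ, (∫⁻ t in Set.Ioc (0:ℝ) 1,
          ‖Complex.exp (2 * Real.pi * Complex.I * m * t) * ((trm μ n t : ℝ) : ℂ)‖₊)
          ≤ ENNReal.ofReal (2 * ‖fc μ (n+1)‖) := by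
        intro n
        have : ∀ t : ℝ, (‖Complex.exp (2 * Real.pi * Complex.I * m * t) * ((trm μ n t : ℝ) : ℂ)‖₊ : ℝ≥0∞)
            ≤ ENNReal.ofReal (2 * ‖fc μ (n+1)‖) := by
          intro t
          rw [← ENNReal.ofReal_coe_nnreal, coe_nnnorm]
          apply ENNReal.ofReal_le_ofReal
          rw [norm_mul, abs_cexp_int, one_mul, Complex.norm_real,
            Real.norm_eq_abs]
          exact trm_abs_le n t
        calc (∫⁻ t in Set.Ioc (0:ℝ) 1, ‖Complex.exp (2 * Real.pi * Complex.I * m * t) * ((trm μ n t : ℝ) : ℂ)‖₊)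
            ≤ ∫⁻ _ in Set.Ioc (0:ℝ) 1, ENNReal.ofReal (2 * ‖fc μ (n+1)‖) :=
              lintegral_mono (fun t => this t)
          _ = ENNReal.ofReal (2 * ‖fc μ (n+1)‖) := by
              rw [MeasureTheory.setLIntegral_const, Real.volume_Ioc]
              norm_num
      apply ne_top_of_le_ne_top _ (ENNReal.tsum_le_tsum hb)
      rw [← ENNReal.ofReal_tsum_of_nonneg (fun n => by positivity) (hsum.mul_left 2)]
      exact ENNReal.ofReal_ne_top
    have heach : ∀ n : ℕ, (∫ t in Set.Ioc (0:ℝ) 1,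
        Complex.exp (2 * Real.pi * Complex.I * m * t) * ((trm μ n t : ℝ) : ℂ))
        = fc μ (n+1) * (if m + (n+1) = 0 then 1 else 0)
          + (starRingEnd ℂ) (fc μ (n+1)) * (if m - (n+1) = 0 then 1 else 0) := by
      intro n
      rw [← intervalIntegral.integral_of_le zero_le_one, integral_exp_trm]
    rw [tsum_congr heach]
    rcases lt_trichotomy m 0 with hm | hm | hm
    · have hn0 : ((((-m-1).toNat : ℕ) : ℤ)) = -m - 1 := Int.toNat_of_nonneg (by omega)
      rw [tsum_eq_single ((-m-1).toNat) ?_]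
      · rw [if_pos (by omega), if_neg (by omega), if_neg (by omega)]
        have : (((((-m-1).toNat : ℕ) : ℤ)) + 1) = -m := by omega
        rw [this]; ring
      · intro b hb
        have hbne : ((b:ℤ)) ≠ -m - 1 := fun h => hb (by omega)
        rw [if_neg (by omega), if_neg (by omega)]
        ring
    · subst hm
      have hz : ∀ n : ℕ, fc μ (n+1) * (if (0:ℤ) + (n+1) = 0 then 1 else 0)
          + (starRingEnd ℂ) (fc μ (n+1)) * (if (0:ℤ) - (n+1) = 0 then 1 else 0) = 0 := by
        intro n
        rw [if_neg (by omega), if_neg (by omega)]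
        ring
      rw [tsum_congr hz, tsum_zero, if_pos rfl, neg_zero, fc_zero]
      ring
    · have hn0 : ((((m-1).toNat : ℕ) : ℤ)) = m - 1 := Int.toNat_of_nonneg (by omega)
      rw [tsum_eq_single ((m-1).toNat) ?_]
      · rw [if_neg (by omega), if_pos (by omega)]
        have : (((((m-1).toNat : ℕ) : ℤ)) + 1) = m := by omega
        rw [this, if_neg (by omega), ← fc_neg]
        ring
      · intro b hb
        have hbne : ((b:ℤ)) ≠ m - 1 := fun h => hb (by omega)
        rw [if_neg (by omega), if_neg (by omega)]
        ring
  rw [key]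
  ring

end Psi

section Key

lemma key_identity (μ : Measure ℝ) [IsProbabilityMeasure μ]
    (hsum : Summable (fun n : ℕ => ‖fc μ (n+1)‖)) :
    ∀ g : C(AddCircle (1:ℝ), ℂ),
    (∫ a, g a ∂(μ.map (fun x : ℝ => (x : AddCircle (1:ℝ)))))
      = ∫ t in (0:ℝ)..1, g (t : AddCircle (1:ℝ)) * (dens μ t : ℂ) := by
  haveI : Fact ((0:ℝ) < 1) := ⟨one_pos⟩
  set S : ℝ := ∑' n : ℕ, ‖fc μ (n+1)‖ with hS
  have hS0 : 0 ≤ S := tsum_nonneg (fun n => norm_nonneg _)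
  have hmkc : Continuous (fun x : ℝ => (x : AddCircle (1:ℝ))) := AddCircle.continuous_mk' 1
  set ν := μ.map (fun x : ℝ => (x : AddCircle (1:ℝ))) with hν
  haveI : IsProbabilityMeasure ν :=
    Measure.isProbabilityMeasure_map hmkc.measurable.aemeasurable
  have hint1 : ∀ g : C(AddCircle (1:ℝ), ℂ), Integrable g ν := fun g =>
    g.continuous.integrable_of_hasCompactSupport ((isClosed_tsupport _).isCompact)
  have hdens : ∀ t : ℝ, ‖(dens μ t : ℂ)‖ ≤ 1 + 2 * S := by
    intro t
    rw [Complex.norm_real, Real.norm_eq_abs]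
    calc |dens μ t| ≤ |dens μ t - 1| + 1 := by
          have := abs_sub_abs_le_abs_sub (dens μ t) 1
          simp only [abs_one] at this
          linarith [abs_sub_abs_le_abs_sub (dens μ t) 1]
      _ ≤ 1 + 2 * S := by have := dens_sub_one_abs hsum t; rw [← hS] at this; linarith
  set Φ : C(AddCircle (1:ℝ), ℂ) →L[ℂ] ℂ :=
    LinearMap.mkContinuous
      { toFun := fun g => ∫ a, g a ∂ν
        map_add' := fun g h => integral_add (hint1 g) (hint1 h)
        map_smul' := fun c g => integral_smul c _ }
      1 (fun g => by
        simp only [LinearMap.coe_mk, AddHom.coe_mk]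
        calc ‖∫ a, g a ∂ν‖ ≤ ‖g‖ * (ν Set.univ).toReal :=
              norm_integral_le_of_norm_le_const (Filter.Eventually.of_forall fun a =>
                g.norm_coe_le_norm a)
          _ = 1 * ‖g‖ := by simp) with hΦ
  set Ψ : C(AddCircle (1:ℝ), ℂ) →L[ℂ] ℂ :=
    LinearMap.mkContinuous
      { toFun := fun g => ∫ t in (0:ℝ)..1, g (t : AddCircle (1:ℝ)) * (dens μ t : ℂ)
        map_add' := fun g h => by
          simp only [ContinuousMap.add_apply, add_mul]
          exact intervalIntegral.integral_add
            (((g.continuous.comp hmkc).mul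
              (Complex.continuous_ofReal.comp (dens_cont hsum))).intervalIntegrable _ _)
            (((h.continuous.comp hmkc).mul
              (Complex.continuous_ofReal.comp (dens_cont hsum))).intervalIntegrable _ _)
        map_smul' := fun c g => by
          simp only [ContinuousMap.smul_apply, smul_eq_mul, RingHom.id_apply, mul_assoc]
          rw [← intervalIntegral.integral_const_mul] }
      (1 + 2 * S) (fun g => by
        simp only [LinearMap.coe_mk, AddHom.coe_mk]
        calc ‖∫ t in (0:ℝ)..1, g (t : AddCircle (1:ℝ)) * (dens μ t : ℂ)‖
            ≤ (1 + 2 * S) * ‖g‖ * |1 - 0| := by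
              apply intervalIntegral.norm_integral_le_of_norm_le_const
              intro t _
              rw [norm_mul]
              calc ‖g (t : AddCircle (1:ℝ))‖ * ‖(dens μ t : ℂ)‖
                  ≤ ‖g‖ * (1 + 2 * S) := by
                    apply mul_le_mul (g.norm_coe_le_norm _) (hdens t)
                      (norm_nonneg _) (norm_nonneg _)
                _ = (1 + 2 * S) * ‖g‖ := by ring
          _ = (1 + 2 * S) * ‖g‖ := by norm_num) with hΨ
  have heq : Φ = Ψ := by
    apply ContinuousLinearMap.ext_on
      (Submodule.dense_iff_topologicalClosure_eq_top.mpr span_fourier_closure_eq_top)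
    rintro _ ⟨m, rfl⟩
    show (∫ a, fourier m a ∂ν) = ∫ t in (0:ℝ)..1, fourier m (t : AddCircle (1:ℝ)) * (dens μ t : ℂ)
    have hR : (∫ t in (0:ℝ)..1, fourier m (t : AddCircle (1:ℝ)) * (dens μ t : ℂ)) = fc μ (-m) := by
      have : ∀ t : ℝ, fourier m (t : AddCircle (1:ℝ)) * (dens μ t : ℂ)
          = Complex.exp (2 * Real.pi * Complex.I * m * t) * (dens μ t : ℂ) := by
        intro t
        rw [fourier_coe_apply]
        norm_num
      simp_rw [this]
      exact psi_fourier μ hsum m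
    rw [hR, hν, integral_map hmkc.measurable.aemeasurable
      (map_continuous (fourier m)).aestronglyMeasurable]
    rw [fc]
    apply integral_congr_ae
    filter_upwards with x
    rw [fourier_coe_apply]
    congr 1
    push_cast
    ring
  intro g
  exact congrFun (congrArg DFunLike.coe heq) g

end Key

lemma key_real (μ : Measure ℝ) [IsProbabilityMeasure μ]
    (hsum : Summable (fun n : ℕ => ‖fc μ (n+1)‖))
    (g : C(AddCircle (1:ℝ), ℝ)) :
    (∫ x, g ((x : ℝ) : AddCircle (1:ℝ)) ∂μ)
      = ∫ t in (0:ℝ)..1, g ((t : ℝ) : AddCircle (1:ℝ)) * dens μ t := by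
  haveI : Fact ((0:ℝ) < 1) := ⟨one_pos⟩
  have hmkc : Continuous (fun x : ℝ => ((x : ℝ) : AddCircle (1:ℝ))) := AddCircle.continuous_mk' 1
  set gC : C(AddCircle (1:ℝ), ℂ) :=
    ⟨fun a => ((g a : ℝ) : ℂ), Complex.continuous_ofReal.comp g.continuous⟩ with hgC
  have h := key_identity μ hsum gC
  have hL : (∫ a, gC a ∂(μ.map (fun x : ℝ => (x : AddCircle (1:ℝ)))))
      = ((∫ x, g ((x : ℝ) : AddCircle (1:ℝ)) ∂μ : ℝ) : ℂ) := by
    rw [integral_map hmkc.measurable.aemeasurable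
      (gC.continuous.aestronglyMeasurable)]
    exact integral_ofReal
  have hR : (∫ t in (0:ℝ)..1, gC ((t : ℝ) : AddCircle (1:ℝ)) * (dens μ t : ℂ))
      = ((∫ t in (0:ℝ)..1, g ((t : ℝ) : AddCircle (1:ℝ)) * dens μ t : ℝ) : ℂ) := by
    rw [← intervalIntegral.integral_ofReal]
    apply intervalIntegral.integral_congr
    intro t _
    push_cast
    rfl
  rw [hL, hR] at h
  exact_mod_cast h

section Squeeze

lemma mk_inj {s t : ℝ} (hs : s ∈ Set.Ico (0:ℝ) 1) (ht : t ∈ Set.Ico (0:ℝ) 1)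
    (h : ((s : ℝ) : AddCircle (1:ℝ)) = (t : ℝ)) : s = t := by
  haveI : Fact ((0:ℝ) < 1) := ⟨one_pos⟩
  have hs' : s ∈ Set.Ico (0:ℝ) (0 + 1) := by simpa using hs
  have ht' : t ∈ Set.Ico (0:ℝ) (0 + 1) := by simpa using ht
  exact (AddCircle.coe_eq_coe_iff_of_mem_Ico hs' ht').mp h

lemma mk_not_mem_image {V : Set ℝ} (hV : V ⊆ Set.Ico 0 1) (h0V : (0:ℝ) ∉ V) {t : ℝ}
    (ht : t ∈ Set.Icc (0:ℝ) 1) (htV : t ∉ V) :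
    ((t : ℝ) : AddCircle (1:ℝ)) ∉ (fun x : ℝ => ((x : ℝ) : AddCircle (1:ℝ))) '' V := by
  rintro ⟨s, hsV, hs⟩
  rcases eq_or_lt_of_le ht.2 with h1 | h1
  · have hco : ((t : ℝ) : AddCircle (1:ℝ)) = ((0 : ℝ) : AddCircle (1:ℝ)) := by
      rw [← h1]
      simpa using (AddCircle.coe_period (p := (1:ℝ)))
    exact h0V (mk_inj (hV hsV) ⟨le_refl 0, one_pos⟩ (hs.trans hco) ▸ hsV)
  · exact htV (mk_inj (hV hsV) ⟨ht.1, h1⟩ hs ▸ hsV)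

lemma integrable_comp_mk (μ : Measure ℝ) [IsProbabilityMeasure μ]
    (g : C(AddCircle (1:ℝ), ℝ)) :
    Integrable (fun x : ℝ => g ((x : ℝ) : AddCircle (1:ℝ))) μ := by
  haveI : Fact ((0:ℝ) < 1) := ⟨one_pos⟩
  refine Integrable.mono' (integrable_const ‖g‖)
    ((g.continuous.comp (AddCircle.continuous_mk' 1)).aestronglyMeasurable) ?_
  filter_upwards with x
  exact g.norm_coe_le_norm _

lemma upper_bound (μ : Measure ℝ) [IsProbabilityMeasure μ]
    (hsum : Summable (fun n : ℕ => ‖fc μ (n+1)‖))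
    {a b ε : ℝ} (ha : 0 < a - ε) (hε : 0 < ε) (hab : a ≤ b) (hb : b + ε < 1) :
    (μ (Set.Ioo a b)).toReal
      ≤ (1 + 2 * ∑' n : ℕ, ‖fc μ (n+1)‖) * (b - a + 2*ε) := by
  haveI : Fact ((0:ℝ) < 1) := ⟨one_pos⟩
  set S : ℝ := ∑' n : ℕ, ‖fc μ (n+1)‖ with hS
  have hS0 : 0 ≤ S := tsum_nonneg (fun n => norm_nonneg _)
  have hmkc : Continuous (fun x : ℝ => ((x : ℝ) : AddCircle (1:ℝ))) := AddCircle.continuous_mk' 1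
  set K := (fun x : ℝ => ((x : ℝ) : AddCircle (1:ℝ))) '' Set.Icc a b with hK
  set U := (fun x : ℝ => ((x : ℝ) : AddCircle (1:ℝ))) '' Set.Ioo (a-ε) (b+ε) with hU
  have hKc : IsCompact K := isCompact_Icc.image hmkc
  have hUo : IsOpen U := QuotientAddGroup.isOpenMap_coe _ isOpen_Ioo
  have hKU : K ⊆ U := Set.image_mono
    (fun t ht => ⟨by linarith [ht.1], by linarith [ht.2]⟩)
  obtain ⟨g, hg1, hg0, -, hg01⟩ := exists_continuous_one_zero_of_isCompact hKc
    hUo.isClosed_compl (Set.disjoint_left.mpr (fun x hx hxc => hxc (hKU hx)))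
  have hVsub : Set.Ioo (a-ε) (b+ε) ⊆ Set.Ico (0:ℝ) 1 :=
    fun t ht => ⟨by linarith [ht.1], by linarith [ht.2]⟩
  have h0V : (0:ℝ) ∉ Set.Ioo (a-ε) (b+ε) := fun h => by linarith [h.1]
  -- step 1 : μ (Ioo a b) ≤ ∫ g ∘ mk dμ
  have step1 : (μ (Set.Ioo a b)).toReal ≤ ∫ x, g ((x : ℝ) : AddCircle (1:ℝ)) ∂μ := by
    change μ.real (Set.Ioo a b) ≤ _
    rw [← MeasureTheory.integral_indicator_one measurableSet_Ioo]
    apply integral_mono ((integrable_const (1:ℝ)).indicator measurableSet_Ioo)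
      (integrable_comp_mk μ g)
    intro x
    by_cases hx : x ∈ Set.Ioo a b
    · rw [Set.indicator_of_mem hx]
      exact le_of_eq (hg1 ⟨x, Set.Ioo_subset_Icc_self hx, rfl⟩).symm
    · rw [Set.indicator_of_notMem hx]
      exact (hg01 _).1
  -- step 2 : ∫ g∘mk dμ = ∫ t in 0..1, g ↑t * dens μ t
  have step2 : (∫ x, g ((x : ℝ) : AddCircle (1:ℝ)) ∂μ)
      = ∫ t in (0:ℝ)..1, g ((t : ℝ) : AddCircle (1:ℝ)) * dens μ t := key_real μ hsum g
  -- step 3 : bound the interval integral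
  have hIoosub : Set.Ioo (a-ε) (b+ε) ⊆ Set.Ioc (0:ℝ) 1 :=
    fun t ht => ⟨by linarith [ht.1], by linarith [ht.2]⟩
  have step3 : (∫ t in (0:ℝ)..1, g ((t : ℝ) : AddCircle (1:ℝ)) * dens μ t)
      ≤ (1 + 2*S) * (b - a + 2*ε) := by
    have hptwise : ∀ t ∈ Set.Icc (0:ℝ) 1, g ((t : ℝ) : AddCircle (1:ℝ)) * dens μ t
        ≤ Set.indicator (Set.Ioo (a-ε) (b+ε)) (fun _ => 1 + 2*S) t := by
      intro t ht
      by_cases htV : t ∈ Set.Ioo (a-ε) (b+ε)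
      · rw [Set.indicator_of_mem htV]
        calc g ((t : ℝ) : AddCircle (1:ℝ)) * dens μ t
            ≤ |g ((t : ℝ) : AddCircle (1:ℝ)) * dens μ t| := le_abs_self _
          _ = |g ((t : ℝ) : AddCircle (1:ℝ))| * |dens μ t| := abs_mul _ _
          _ ≤ 1 * (1 + 2*S) := by
              apply mul_le_mul _ _ (abs_nonneg _) zero_le_one
              · rw [abs_le]
                have := hg01 (((t : ℝ) : AddCircle (1:ℝ)))
                exact ⟨by linarith [this.1], this.2⟩
              · have h1 := dens_sub_one_abs hsum t
                rw [← hS] at h1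
                rw [abs_le] at h1 ⊢
                constructor <;> linarith [h1.1, h1.2]
          _ = 1 + 2*S := one_mul _
      · rw [Set.indicator_of_notMem htV]
        have : g ((t : ℝ) : AddCircle (1:ℝ)) = 0 :=
          hg0 (mk_not_mem_image hVsub h0V ht htV)
        rw [this, zero_mul]
    have hint1 : IntervalIntegrable (fun t => g ((t : ℝ) : AddCircle (1:ℝ)) * dens μ t)
        volume 0 1 :=
      ((g.continuous.comp hmkc).mul (dens_cont hsum)).intervalIntegrable _ _
    have hint2 : IntervalIntegrable
        (Set.indicator (Set.Ioo (a-ε) (b+ε)) (fun _ => 1 + 2*S)) volume 0 1 := by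
      rw [intervalIntegrable_iff, Set.uIoc_of_le zero_le_one]
      exact (integrableOn_const (by simp [Real.volume_Ioc])).indicator
        measurableSet_Ioo
    calc (∫ t in (0:ℝ)..1, g ((t : ℝ) : AddCircle (1:ℝ)) * dens μ t)
        ≤ ∫ t in (0:ℝ)..1, Set.indicator (Set.Ioo (a-ε) (b+ε)) (fun _ => 1 + 2*S) t :=
          intervalIntegral.integral_mono_on zero_le_one hint1 hint2 hptwise
      _ = (1 + 2*S) * (b - a + 2*ε) := by
          rw [intervalIntegral.integral_of_le zero_le_one,
            MeasureTheory.setIntegral_indicator measurableSet_Ioo,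
            Set.inter_eq_self_of_subset_right hIoosub, MeasureTheory.setIntegral_const,
            Real.volume_real_Ioo_of_le (by linarith), smul_eq_mul]
          ring
  calc (μ (Set.Ioo a b)).toReal ≤ _ := step1
    _ = _ := step2
    _ ≤ (1 + 2*S) * (b - a + 2*ε) := step3

lemma lower_bound (μ : Measure ℝ) [IsProbabilityMeasure μ]
    (hsupp : μ (Set.Ico (0:ℝ) 1)ᶜ = 0)
    (hsum : Summable (fun n : ℕ => ‖fc μ (n+1)‖))
    {a b ε : ℝ} (ha : 0 < a) (hε : 0 < ε) (hab : a + ε ≤ b - ε) (hb : b < 1) :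
    ((b - a - 2*ε) - 2 * (∑' n : ℕ, ‖fc μ (n+1)‖) * (b-a))
      ≤ (μ (Set.Ioo a b)).toReal := by
  haveI : Fact ((0:ℝ) < 1) := ⟨one_pos⟩
  set S : ℝ := ∑' n : ℕ, ‖fc μ (n+1)‖ with hS
  have hS0 : 0 ≤ S := tsum_nonneg (fun n => norm_nonneg _)
  have hmkc : Continuous (fun x : ℝ => ((x : ℝ) : AddCircle (1:ℝ))) := AddCircle.continuous_mk' 1
  have hsubIoo : Set.Icc (a+ε) (b-ε) ⊆ Set.Ioo a b :=
    fun t ht => ⟨by linarith [ht.1], by linarith [ht.2]⟩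
  set K := (fun x : ℝ => ((x : ℝ) : AddCircle (1:ℝ))) '' Set.Icc (a+ε) (b-ε) with hK
  set U := (fun x : ℝ => ((x : ℝ) : AddCircle (1:ℝ))) '' Set.Ioo a b with hU
  have hKc : IsCompact K := isCompact_Icc.image hmkc
  have hUo : IsOpen U := QuotientAddGroup.isOpenMap_coe _ isOpen_Ioo
  have hKU : K ⊆ U := Set.image_mono hsubIoo
  obtain ⟨g, hg1, hg0, -, hg01⟩ := exists_continuous_one_zero_of_isCompact hKc
    hUo.isClosed_compl (Set.disjoint_left.mpr (fun x hx hxc => hxc (hKU hx)))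
  have hVsub : Set.Ioo a b ⊆ Set.Ico (0:ℝ) 1 :=
    fun t ht => ⟨by linarith [ht.1], by linarith [ht.2]⟩
  have h0V : (0:ℝ) ∉ Set.Ioo a b := fun h => by linarith [h.1]
  -- step A : ∫ g∘mk dμ ≤ μ (Ioo a b)
  have stepA : (∫ x, g ((x : ℝ) : AddCircle (1:ℝ)) ∂μ) ≤ (μ (Set.Ioo a b)).toReal := by
    change _ ≤ μ.real (Set.Ioo a b)
    rw [← MeasureTheory.integral_indicator_one measurableSet_Ioo]
    apply integral_mono_ae (integrable_comp_mk μ g)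
      ((integrable_const (1:ℝ)).indicator measurableSet_Ioo)
    have hae0 : ∀ᵐ x ∂μ, x ∈ Set.Ico (0:ℝ) 1 := by
      rw [MeasureTheory.ae_iff]
      exact hsupp
    filter_upwards [hae0] with x hx
    by_cases hxV : x ∈ Set.Ioo a b
    · rw [Set.indicator_of_mem hxV]
      exact (hg01 _).2
    · rw [Set.indicator_of_notMem hxV]
      exact le_of_eq (hg0 (mk_not_mem_image hVsub h0V ⟨hx.1, hx.2.le⟩ hxV))
  -- step C : lower bound for the interval integral
  have stepC : ((b - ε - (a + ε)) - 2*S*(b-a))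
      ≤ ∫ t in (0:ℝ)..1, g ((t : ℝ) : AddCircle (1:ℝ)) * dens μ t := by
    have hptwise : ∀ t ∈ Set.Icc (0:ℝ) 1,
        Set.indicator (Set.Icc (a+ε) (b-ε)) (fun _ => (1:ℝ)) t
          - Set.indicator (Set.Ioo a b) (fun _ => 2*S) t
        ≤ g ((t : ℝ) : AddCircle (1:ℝ)) * dens μ t := by
      intro t ht
      by_cases htV : t ∈ Set.Ioo a b
      · rw [Set.indicator_of_mem htV]
        have hgle : g ((t : ℝ) : AddCircle (1:ℝ)) ≤ 1 := (hg01 _).2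
        have hgge : (0:ℝ) ≤ g ((t : ℝ) : AddCircle (1:ℝ)) := (hg01 _).1
        have hind1 : Set.indicator (Set.Icc (a+ε) (b-ε)) (fun _ => (1:ℝ)) t
            ≤ g ((t : ℝ) : AddCircle (1:ℝ)) := by
          by_cases htK : t ∈ Set.Icc (a+ε) (b-ε)
          · rw [Set.indicator_of_mem htK]
            exact le_of_eq (hg1 ⟨t, htK, rfl⟩).symm
          · rw [Set.indicator_of_notMem htK]
            exact hgge
        have hd : |dens μ t - 1| ≤ 2*S := by
          have := dens_sub_one_abs hsum t
          rwa [← hS] at this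
        have habs : |g ((t : ℝ) : AddCircle (1:ℝ)) * (dens μ t - 1)| ≤ 2*S := by
          rw [abs_mul]
          calc |g ((t : ℝ) : AddCircle (1:ℝ))| * |dens μ t - 1| ≤ 1 * (2*S) := by
                apply mul_le_mul _ hd (abs_nonneg _) zero_le_one
                rw [abs_le]; exact ⟨by linarith, hgle⟩
            _ = 2*S := one_mul _
        have he : g ((t : ℝ) : AddCircle (1:ℝ)) * dens μ t
            = g ((t : ℝ) : AddCircle (1:ℝ))
              + g ((t : ℝ) : AddCircle (1:ℝ)) * (dens μ t - 1) := by ring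
        have := neg_abs_le (g ((t : ℝ) : AddCircle (1:ℝ)) * (dens μ t - 1))
        linarith
      · have hg0' : g ((t : ℝ) : AddCircle (1:ℝ)) = 0 :=
          hg0 (mk_not_mem_image hVsub h0V ht htV)
        rw [Set.indicator_of_notMem htV,
          Set.indicator_of_notMem (fun h => htV (hsubIoo h)), hg0', zero_mul]
        simp
    have hint1 : IntervalIntegrable (fun t => g ((t : ℝ) : AddCircle (1:ℝ)) * dens μ t)
        volume 0 1 :=
      ((g.continuous.comp hmkc).mul (dens_cont hsum)).intervalIntegrable _ _
    have hind1int : IntervalIntegrable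
        (Set.indicator (Set.Icc (a+ε) (b-ε)) (fun _ => (1:ℝ))) volume 0 1 := by
      rw [intervalIntegrable_iff, Set.uIoc_of_le zero_le_one]
      exact (integrableOn_const (by simp [Real.volume_Ioc])).indicator
        measurableSet_Icc
    have hind2int : IntervalIntegrable
        (Set.indicator (Set.Ioo a b) (fun _ => 2*S)) volume 0 1 := by
      rw [intervalIntegrable_iff, Set.uIoc_of_le zero_le_one]
      exact (integrableOn_const (by simp [Real.volume_Ioc])).indicator
        measurableSet_Ioo
    have hcalc : (∫ t in (0:ℝ)..1,
        (Set.indicator (Set.Icc (a+ε) (b-ε)) (fun _ => (1:ℝ)) t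
          - Set.indicator (Set.Ioo a b) (fun _ => 2*S) t))
        = (b - ε - (a + ε)) - 2*S*(b-a) := by
      rw [intervalIntegral.integral_sub hind1int hind2int]
      have h1 : (∫ t in (0:ℝ)..1, Set.indicator (Set.Icc (a+ε) (b-ε)) (fun _ => (1:ℝ)) t)
          = b - ε - (a + ε) := by
        rw [intervalIntegral.integral_of_le zero_le_one,
          MeasureTheory.setIntegral_indicator measurableSet_Icc,
          Set.inter_eq_self_of_subset_right
            (show Set.Icc (a+ε) (b-ε) ⊆ Set.Ioc 0 1 from
              fun t htt => ⟨by linarith [htt.1], by linarith [htt.2]⟩),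
          MeasureTheory.setIntegral_const, Real.volume_real_Icc_of_le (by linarith), smul_eq_mul]
        ring
      have h2 : (∫ t in (0:ℝ)..1, Set.indicator (Set.Ioo a b) (fun _ => 2*S) t)
          = 2*S*(b-a) := by
        rw [intervalIntegral.integral_of_le zero_le_one,
          MeasureTheory.setIntegral_indicator measurableSet_Ioo,
          Set.inter_eq_self_of_subset_right
            (show Set.Ioo a b ⊆ Set.Ioc 0 1 from
              fun t htt => ⟨by linarith [htt.1], by linarith [htt.2]⟩),
          MeasureTheory.setIntegral_const, Real.volume_real_Ioo_of_le (by linarith), smul_eq_mul]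
        ring
      rw [h1, h2]
    calc ((b - ε - (a + ε)) - 2*S*(b-a)) = _ := hcalc.symm
      _ ≤ ∫ t in (0:ℝ)..1, g ((t : ℝ) : AddCircle (1:ℝ)) * dens μ t :=
          intervalIntegral.integral_mono_on zero_le_one (hind1int.sub hind2int) hint1 hptwise
  have hkr := key_real μ hsum g
  calc ((b - a - 2*ε) - 2*S*(b-a)) = ((b - ε - (a + ε)) - 2*S*(b-a)) := by ring
    _ ≤ ∫ t in (0:ℝ)..1, g ((t : ℝ) : AddCircle (1:ℝ)) * dens μ t := stepC
    _ = ∫ x, g ((x : ℝ) : AddCircle (1:ℝ)) ∂μ := hkr.symm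
    _ ≤ (μ (Set.Ioo a b)).toReal := stepA

end Squeeze

theorem stmt14 (μ : Measure ℝ) [IsProbabilityMeasure μ]
    (hsupp : μ (Set.Ico (0:ℝ) 1)ᶜ = 0)
    (hsum : Summable (fun n : ℕ => ‖fc μ (n+1)‖))
    (hlt : (∑' n : ℕ, ‖fc μ (n+1)‖) < 1/2)
    (x : ℝ) (hx : x ∈ Set.Ioo (0:ℝ) 1) :
    ∀ᶠ r in 𝓝[>] (0:ℝ),
      (1 - 2 * ∑' n : ℕ, ‖fc μ (n+1)‖) * (2 * r)
          ≤ (μ (Set.Ioo (x - r) (x + r))).toReal ∧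
      (μ (Set.Ioo (x - r) (x + r))).toReal
          ≤ (1 + 2 * ∑' n : ℕ, ‖fc μ (n+1)‖) * (2 * r) := by
  set S : ℝ := ∑' n : ℕ, ‖fc μ (n+1)‖ with hS
  obtain ⟨hx0, hx1⟩ := hx
  have hmem : Set.Ioo (0:ℝ) (min x (1-x)) ∈ 𝓝[>] (0:ℝ) :=
    Ioo_mem_nhdsGT_of_mem ⟨le_refl 0, lt_min hx0 (by linarith)⟩
  filter_upwards [hmem] with r hr
  obtain ⟨hr0, hrm⟩ := hr
  have hrx : r < x := lt_of_lt_of_le hrm (min_le_left _ _)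
  have hrx' : r < 1 - x := lt_of_lt_of_le hrm (min_le_right _ _)
  constructor
  · -- lower bound
    have hc : Continuous fun ε : ℝ => (2*r - 2*ε) - 2*S*(2*r) := by continuity
    have htend : Tendsto (fun ε : ℝ => (2*r - 2*ε) - 2*S*(2*r)) (𝓝[>] (0:ℝ))
        (𝓝 ((1 - 2*S) * (2*r))) := by
      have h0 := (hc.tendsto 0).mono_left (nhdsWithin_le_nhds (s := Set.Ioi (0:ℝ)))
      convert h0 using 2
      ring
    apply le_of_tendsto htend
    filter_upwards [Ioo_mem_nhdsGT_of_mem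
      (show (0:ℝ) ∈ Set.Ico (0:ℝ) r from ⟨le_refl 0, hr0⟩)] with ε hε
    have := lower_bound μ hsupp hsum (a := x - r) (b := x + r)
      (by linarith) hε.1 (by linarith [hε.2]) (by linarith)
    rw [← hS] at this
    linarith
  · -- upper bound
    have hc : Continuous fun ε : ℝ => (1 + 2*S) * (2*r + 2*ε) := by continuity
    have htend : Tendsto (fun ε : ℝ => (1 + 2*S) * (2*r + 2*ε)) (𝓝[>] (0:ℝ))
        (𝓝 ((1 + 2*S) * (2*r))) := by
      have h0 := (hc.tendsto 0).mono_left (nhdsWithin_le_nhds (s := Set.Ioi (0:ℝ)))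
      convert h0 using 2
      ring
    apply ge_of_tendsto htend
    filter_upwards [Ioo_mem_nhdsGT_of_mem
      (show (0:ℝ) ∈ Set.Ico (0:ℝ) (min (x - r) (1 - (x + r)))
        from ⟨le_refl 0, lt_min (by linarith) (by linarith)⟩)] with ε hε
    have h1 : ε < x - r := lt_of_lt_of_le hε.2 (min_le_left _ _)
    have h2 : ε < 1 - (x + r) := lt_of_lt_of_le hε.2 (min_le_right _ _)
    have := upper_bound μ hsum (a := x - r) (b := x + r)
      (by linarith) hε.1 (by linarith) (by linarith)
    rw [← hS] at this
    linarith
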